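/- Let r : ℕ → ℝ be a sequence of positive reals decreasing to 0, F = {x : ℕ → ℂ | limsup |x_n|^{r_n} < ∞} and K = {x : ℕ → ℂ | limsup |x_n|^{r_n} = 0}. Then K is an ideal of the ring F: K is an additive subgroup and for all x ∈ F, k ∈ K, the pointwise product x·k lies in K. -/

import Mathlib

open Filter

noncomputable def unorm (r : ℕ → ℝ) (x : ℕ → ℂ) : ENNReal :=
  Filter.limsup (fun n => (‖x n‖₊ : ENNReal) ^ (r n)) Filter.atTop

lemma tendsto_of_limsup_zero {u : ℕ → ENNReal} (h : limsup u atTop = 0) :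
    Tendsto u atTop (nhds 0) := by
  refine tendsto_of_liminf_eq_limsup ?_ h
  refine le_antisymm ?_ zero_le
  calc liminf u atTop ≤ limsup u atTop := liminf_le_limsup
    _ = 0 := h

lemma sum_rpow_bound (x y : ENNReal) {s : ℝ} (hs : 0 ≤ s) :
    (x + y) ^ s ≤ 2 ^ s * (x ^ s + y ^ s) := by
  have h1 : x + y ≤ 2 * (x ⊔ y) := by
    rw [two_mul]
    exact add_le_add le_sup_left le_sup_right
  calc (x + y) ^ s ≤ (2 * (x ⊔ y)) ^ s := ENNReal.rpow_le_rpow h1 hs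
    _ = 2 ^ s * (x ⊔ y) ^ s := ENNReal.mul_rpow_of_nonneg _ _ hs
    _ ≤ 2 ^ s * (x ^ s + y ^ s) := by
        gcongr
        rcases le_total x y with h | h
        · rw [sup_eq_right.mpr h]; exact le_add_self
        · rw [sup_eq_left.mpr h]; exact le_add_right le_rfl

theorem stmt3 (r : ℕ → ℝ) (hpos : ∀ n, 0 < r n) (hanti : Antitone r)
    (hlim : Tendsto r atTop (nhds 0)) :
    unorm r 0 = 0 ∧
    (∀ k k' : ℕ → ℂ, unorm r k = 0 → unorm r k' = 0 → unorm r (k - k') = 0) ∧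
    (∀ x k : ℕ → ℂ, unorm r x < ⊤ → unorm r k = 0 → unorm r (x * k) = 0) := by
  refine ⟨?_, ?_, ?_⟩
  · have : (fun n => (‖(0 : ℕ → ℂ) n‖₊ : ENNReal) ^ (r n)) = fun _ => (0 : ENNReal) := by
      funext n
      simp [ENNReal.zero_rpow_of_pos (hpos n)]
    rw [unorm, this, limsup_const]
  · intro k k' hk hk'
    have ha : Tendsto (fun n => (‖k n‖₊ : ENNReal) ^ (r n)) atTop (nhds 0) :=
      tendsto_of_limsup_zero hk
    have hb : Tendsto (fun n => (‖k' n‖₊ : ENNReal) ^ (r n)) atTop (nhds 0) :=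
      tendsto_of_limsup_zero hk'
    have hC : (2 : ENNReal) ^ (r 0) ≠ ⊤ :=
      (ENNReal.rpow_lt_top_of_nonneg (hpos 0).le (by norm_num)).ne
    have hub : Tendsto (fun n => (2 : ENNReal) ^ (r 0) *
        ((‖k n‖₊ : ENNReal) ^ (r n) + (‖k' n‖₊ : ENNReal) ^ (r n))) atTop (nhds 0) := by
      have := ENNReal.Tendsto.const_mul (a := (2 : ENNReal) ^ (r 0)) (ha.add hb)
        (Or.inr hC)
      simpa using this
    have hle : ∀ n, (‖(k - k') n‖₊ : ENNReal) ^ (r n) ≤ (2 : ENNReal) ^ (r 0) *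
        ((‖k n‖₊ : ENNReal) ^ (r n) + (‖k' n‖₊ : ENNReal) ^ (r n)) := by
      intro n
      have h1 : (‖(k - k') n‖₊ : ENNReal) ≤ (‖k n‖₊ : ENNReal) + (‖k' n‖₊ : ENNReal) := by
        have := nnnorm_sub_le (k n) (k' n)
        exact_mod_cast this
      calc (‖(k - k') n‖₊ : ENNReal) ^ (r n)
          ≤ ((‖k n‖₊ : ENNReal) + (‖k' n‖₊ : ENNReal)) ^ (r n) :=
            ENNReal.rpow_le_rpow h1 (hpos n).le
        _ ≤ (2 : ENNReal) ^ (r n) *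
            ((‖k n‖₊ : ENNReal) ^ (r n) + (‖k' n‖₊ : ENNReal) ^ (r n)) :=
            sum_rpow_bound _ _ (hpos n).le
        _ ≤ (2 : ENNReal) ^ (r 0) *
            ((‖k n‖₊ : ENNReal) ^ (r n) + (‖k' n‖₊ : ENNReal) ^ (r n)) := by
            exact mul_le_mul_left
              (ENNReal.rpow_le_rpow_of_exponent_le (by norm_num) (hanti (Nat.zero_le n))) _
    have htend : Tendsto (fun n => (‖(k - k') n‖₊ : ENNReal) ^ (r n)) atTop (nhds 0) :=
      tendsto_of_tendsto_of_tendsto_of_le_of_le tendsto_const_nhds hub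
        (fun n => zero_le) hle
    exact htend.limsup_eq
  · intro x k hx hk
    have hg : Tendsto (fun n => (‖k n‖₊ : ENNReal) ^ (r n)) atTop (nhds 0) :=
      tendsto_of_limsup_zero hk
    set C := unorm r x + 1 with hCdef
    have hC : C ≠ ⊤ := by
      simp [hCdef, ENNReal.add_ne_top, hx.ne]
    have hev : ∀ᶠ n in atTop, (‖x n‖₊ : ENNReal) ^ (r n) < C :=
      eventually_lt_of_limsup_lt (ENNReal.lt_add_right hx.ne one_ne_zero)
    have hub : Tendsto (fun n => C * ((‖k n‖₊ : ENNReal) ^ (r n))) atTop (nhds 0) := by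
      have := ENNReal.Tendsto.const_mul (a := C) hg (Or.inr hC)
      simpa using this
    have hle : ∀ᶠ n in atTop, (‖(x * k) n‖₊ : ENNReal) ^ (r n) ≤
        C * ((‖k n‖₊ : ENNReal) ^ (r n)) := by
      filter_upwards [hev] with n hn
      have heq : (‖(x * k) n‖₊ : ENNReal) ^ (r n) =
          (‖x n‖₊ : ENNReal) ^ (r n) * (‖k n‖₊ : ENNReal) ^ (r n) := by
        rw [Pi.mul_apply, nnnorm_mul, ENNReal.coe_mul,
          ENNReal.mul_rpow_of_nonneg _ _ (hpos n).le]
      rw [heq]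
      exact mul_le_mul_left hn.le _
    have htend : Tendsto (fun n => (‖(x * k) n‖₊ : ENNReal) ^ (r n)) atTop (nhds 0) :=
      tendsto_of_tendsto_of_tendsto_of_le_of_le' tendsto_const_nhds hub
        (Eventually.of_forall fun n => zero_le) hle
    exact htend.limsup_eq
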